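/- Let p be a prime, Λ = ℤ_p[[T]], and let f ∈ Λ be a nonzero power series that is not divisible by T². Set X = Λ/(f). Then the natural ℤ_p-linear map from the kernel of multiplication by T on X to the coinvariants X/TX, sending an element to its residue class, has finite kernel and finite cokernel. -/

import Mathlib

set_option maxHeartbeats 1600000
set_option synthInstance.maxHeartbeats 400000

/-- The quotient of `ℤ_[p]` by a nonzero principal ideal is finite. -/
lemma aux_padic_quot_finite (p : ℕ) [Fact p.Prime] (c : ℤ_[p]) (hc : c ≠ 0) :
    Finite (ℤ_[p] ⧸ Ideal.span {c}) := by
  have hn : Ideal.span {c} =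
      Ideal.span {(p : ℤ_[p]) ^ (PadicInt.valuation c)} := by
    exact Ideal.span_singleton_eq_span_singleton.mpr
      (Associated.symm ⟨PadicInt.unitCoeff hc,
        by rw [mul_comm]; exact (PadicInt.unitCoeff_spec hc).symm⟩)
  haveI : NeZero (p ^ (PadicInt.valuation c)) :=
    ⟨pow_ne_zero _ (Fact.out : p.Prime).ne_zero⟩
  rw [hn, ← PadicInt.ker_toZModPow (PadicInt.valuation c)]
  exact Finite.of_injective _
    (RingHom.kerLift_injective (PadicInt.toZModPow (p := p) (PadicInt.valuation c)))

/-- Key divisibility lemma: if `T² ∤ f` then `f ∣ T²g → f ∣ Tg`. -/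
lemma aux_dvd (p : ℕ) [Fact p.Prime] (f : PowerSeries ℤ_[p])
    (hsq : ¬ (PowerSeries.X : PowerSeries ℤ_[p]) ^ 2 ∣ f) (g : PowerSeries ℤ_[p])
    (h2 : f ∣ PowerSeries.X ^ 2 * g) : f ∣ PowerSeries.X * g := by
  obtain ⟨q, hq⟩ := h2
  by_cases hX : (PowerSeries.X : PowerSeries ℤ_[p]) ∣ f
  · obtain ⟨h, rfl⟩ := hX
    have hXh : ¬ (PowerSeries.X : PowerSeries ℤ_[p]) ∣ h := by
      rintro ⟨t, rfl⟩
      exact hsq ⟨t, by ring⟩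
    have hXg : PowerSeries.X * g = h * q := by
      have h1 : PowerSeries.X * (PowerSeries.X * g) = PowerSeries.X * (h * q) := by
        rw [← mul_assoc, ← pow_two, hq]; ring
      exact mul_left_cancel₀ PowerSeries.X_ne_zero h1
    have hXq : (PowerSeries.X : PowerSeries ℤ_[p]) ∣ q := by
      rcases PowerSeries.X_prime.2.2 h q ⟨g, hXg.symm⟩ with h1 | h1
      · exact absurd h1 hXh
      · exact h1
    obtain ⟨q₁, rfl⟩ := hXq
    refine ⟨q₁, ?_⟩
    have h2 : PowerSeries.X * g = h * (PowerSeries.X * q₁) := hXg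
    rw [h2]; ring
  · have h1 : (PowerSeries.X : PowerSeries ℤ_[p]) ∣ f * q :=
      ⟨PowerSeries.X * g, by rw [← hq]; ring⟩
    rcases PowerSeries.X_prime.2.2 f q h1 with h' | h'
    · exact absurd h' hX
    obtain ⟨q₁, rfl⟩ := h'
    refine ⟨q₁, mul_left_cancel₀ PowerSeries.X_ne_zero ?_⟩
    rw [← mul_assoc, ← pow_two, hq]; ring

/-- If an abelian group `Q` receives a surjective additive map `π` from
`ℤ_[p]⟦X⟧` that kills all multiples of `X` and all multiples of a power series
`h` with nonzero constant term, then `Q` is finite. -/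
lemma aux_coker_finite (p : ℕ) [Fact p.Prime] {Q : Type*} [AddCommGroup Q]
    (h : PowerSeries ℤ_[p]) (hh0 : PowerSeries.constantCoeff (R := ℤ_[p]) h ≠ 0)
    (π : PowerSeries ℤ_[p] →+ Q) (hs : Function.Surjective π)
    (hπX : ∀ t, π (PowerSeries.X * t) = 0) (hπh : ∀ e, π (h * e) = 0) :
    Finite Q := by
  set c := PowerSeries.constantCoeff (R := ℤ_[p]) h with hcdef
  haveI : Finite (ℤ_[p] ⧸ Ideal.span {c}) := aux_padic_quot_finite p c hh0
  have hπc : ∀ d : ℤ_[p], π (PowerSeries.C (R := ℤ_[p]) (c * d)) = 0 := by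
    intro d
    have hcc : PowerSeries.constantCoeff (R := ℤ_[p])
        (h * PowerSeries.C (R := ℤ_[p]) d - PowerSeries.C (R := ℤ_[p]) (c * d)) = 0 := by
      simp only [map_sub, map_mul, PowerSeries.constantCoeff_C, ← hcdef, sub_self]
    obtain ⟨t, ht⟩ := PowerSeries.X_dvd_iff.mpr hcc
    have hrw : PowerSeries.C (R := ℤ_[p]) (c * d)
        = h * PowerSeries.C (R := ℤ_[p]) d - PowerSeries.X * t := by rw [← ht]; ring
    rw [hrw, map_sub, hπh, hπX, sub_zero]
  have key : ∀ d₁ d₂ : ℤ_[p], d₁ - d₂ ∈ Ideal.span {c} →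
      π (PowerSeries.C (R := ℤ_[p]) d₁) = π (PowerSeries.C (R := ℤ_[p]) d₂) := by
    intro d₁ d₂ hd
    obtain ⟨e, he⟩ := Ideal.mem_span_singleton.mp hd
    have h0 : π (PowerSeries.C (R := ℤ_[p]) d₁) - π (PowerSeries.C (R := ℤ_[p]) d₂) = 0 := by
      rw [← map_sub, ← map_sub, he, hπc]
    exact sub_eq_zero.mp h0
  let F : (ℤ_[p] ⧸ Ideal.span {c}) → Q :=
    fun a => Quotient.liftOn' a (fun d => π (PowerSeries.C (R := ℤ_[p]) d))
      (fun d₁ d₂ hd => key d₁ d₂ (by rwa [Submodule.quotientRel_def] at hd))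
  have hFs : Function.Surjective F := by
    intro q
    obtain ⟨g, rfl⟩ := hs q
    refine ⟨Ideal.Quotient.mk _ (PowerSeries.constantCoeff (R := ℤ_[p]) g), ?_⟩
    have hcc : PowerSeries.constantCoeff (R := ℤ_[p])
        (g - PowerSeries.C (R := ℤ_[p]) (PowerSeries.constantCoeff (R := ℤ_[p]) g)) = 0 := by
      simp only [map_sub, PowerSeries.constantCoeff_C, sub_self]
    obtain ⟨t, ht⟩ := PowerSeries.X_dvd_iff.mpr hcc
    have h0 : π g - π (PowerSeries.C (R := ℤ_[p]) (PowerSeries.constantCoeff (R := ℤ_[p]) g)) = 0 := by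
      rw [← map_sub, ht, hπX]
    have hF : F (Ideal.Quotient.mk (Ideal.span {c}) (PowerSeries.constantCoeff (R := ℤ_[p]) g))
        = π (PowerSeries.C (R := ℤ_[p]) (PowerSeries.constantCoeff (R := ℤ_[p]) g)) := rfl
    rw [hF]
    exact (sub_eq_zero.mp h0).symm
  exact Finite.of_surjective F hFs

/-- Let `f ∈ Λ = ℤ_[p][[T]]` be nonzero with `T² ∤ f`, and set
`X = Λ/(f)`. The natural map from the kernel of multiplication by `T` on `X` to
the coinvariants `X/TX`, sending an element to its residue class, has finite
kernel and finite cokernel. -/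
theorem truncated_euler_char_defined_of_sq_not_dvd
    (p : ℕ) [Fact p.Prime] (f : PowerSeries ℤ_[p]) (hf : f ≠ 0)
    (hsq : ¬ (PowerSeries.X : PowerSeries ℤ_[p]) ^ 2 ∣ f)
    (φ : (PowerSeries ℤ_[p] ⧸ Ideal.span {f}) →ₗ[PowerSeries ℤ_[p]]
        (PowerSeries ℤ_[p] ⧸ Ideal.span {f}))
    (hφ : φ = LinearMap.lsmul (PowerSeries ℤ_[p]) (PowerSeries ℤ_[p] ⧸ Ideal.span {f})
        (PowerSeries.X : PowerSeries ℤ_[p]))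
    (ψ : LinearMap.ker φ →ₗ[PowerSeries ℤ_[p]]
        ((PowerSeries ℤ_[p] ⧸ Ideal.span {f}) ⧸ LinearMap.range φ))
    (hψ : ψ = (LinearMap.range φ).mkQ.comp (LinearMap.ker φ).subtype) :
    Finite (LinearMap.ker ψ) ∧
      Finite (((PowerSeries ℤ_[p] ⧸ Ideal.span {f}) ⧸ LinearMap.range φ) ⧸
        LinearMap.range ψ) := by
  have hsmul : ∀ (a g : PowerSeries ℤ_[p]),
      a • Ideal.Quotient.mk (Ideal.span {f}) g
        = Ideal.Quotient.mk (Ideal.span {f}) (a * g) := by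
    intro a g
    rw [← Ideal.Quotient.mk_eq_mk, ← Ideal.Quotient.mk_eq_mk, ← Submodule.Quotient.mk_smul,
      smul_eq_mul]
  obtain ⟨h, hh0, hXh⟩ : ∃ h : PowerSeries ℤ_[p],
      PowerSeries.constantCoeff (R := ℤ_[p]) h ≠ 0 ∧ PowerSeries.X * h ∈ Ideal.span {f} := by
    by_cases hX : (PowerSeries.X : PowerSeries ℤ_[p]) ∣ f
    · obtain ⟨h, rfl⟩ := hX
      refine ⟨h, ?_, Ideal.mem_span_singleton_self _⟩
      intro h0
      obtain ⟨t, rfl⟩ := PowerSeries.X_dvd_iff.mpr h0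
      exact hsq ⟨t, by ring⟩
    · exact ⟨f, fun h0 => hX (PowerSeries.X_dvd_iff.mpr h0),
        Ideal.mul_mem_left _ _ (Ideal.mem_span_singleton_self _)⟩
  constructor
  · -- the kernel of ψ is trivial
    have hall : ∀ x : LinearMap.ker ψ, x = 0 := by
      rintro ⟨⟨x, hxker⟩, hxψ⟩
      rw [LinearMap.mem_ker, hψ] at hxψ
      have hxrange : x ∈ LinearMap.range φ := by
        simpa [Submodule.Quotient.mk_eq_zero] using hxψ
      obtain ⟨z, hz⟩ := hxrange
      obtain ⟨g, rfl⟩ := Ideal.Quotient.mk_surjective z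
      rw [hφ] at hz
      rw [LinearMap.lsmul_apply, hsmul] at hz
      have hx : x = Ideal.Quotient.mk (Ideal.span {f}) (PowerSeries.X * g) := hz.symm
      have hx0 : φ x = 0 := hxker
      rw [hφ, LinearMap.lsmul_apply] at hx0
      have h2 : PowerSeries.X * (PowerSeries.X * g) ∈ Ideal.span {f} := by
        rw [← Ideal.Quotient.eq_zero_iff_mem]
        calc Ideal.Quotient.mk (Ideal.span {f}) (PowerSeries.X * (PowerSeries.X * g))
            = PowerSeries.X • x := by rw [hx, hsmul]
          _ = 0 := hx0
      have hdvd : f ∣ PowerSeries.X ^ 2 * g := by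
        rw [← Ideal.mem_span_singleton]
        convert h2 using 1; ring
      have hfd : f ∣ PowerSeries.X * g := aux_dvd p f hsq g hdvd
      have hx0' : x = 0 := by
        rw [hx, Ideal.Quotient.eq_zero_iff_mem, Ideal.mem_span_singleton]
        exact hfd
      exact Subtype.ext (Subtype.ext hx0')
    haveI : Subsingleton (LinearMap.ker ψ) := subsingleton_of_forall_eq 0 hall
    exact Finite.of_subsingleton
  · -- the cokernel of ψ is finite
    let π : PowerSeries ℤ_[p] →+
        (((PowerSeries ℤ_[p] ⧸ Ideal.span {f}) ⧸ LinearMap.range φ) ⧸ LinearMap.range ψ) :=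
      ((LinearMap.range ψ).mkQ.toAddMonoidHom.comp
        (LinearMap.range φ).mkQ.toAddMonoidHom).comp
        (Ideal.Quotient.mk (Ideal.span {f})).toAddMonoidHom
    have hπapp : ∀ g, π g = (LinearMap.range ψ).mkQ
        ((LinearMap.range φ).mkQ (Ideal.Quotient.mk (Ideal.span {f}) g)) := fun g => rfl
    have hs : Function.Surjective π := by
      intro q
      obtain ⟨q1, rfl⟩ := Submodule.mkQ_surjective _ q
      obtain ⟨q2, rfl⟩ := Submodule.mkQ_surjective _ q1
      obtain ⟨g, rfl⟩ := Ideal.Quotient.mk_surjective q2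
      exact ⟨g, rfl⟩
    refine aux_coker_finite p h hh0 π hs ?_ ?_
    · intro t
      have hmem : Ideal.Quotient.mk (Ideal.span {f}) (PowerSeries.X * t)
          ∈ LinearMap.range φ :=
        ⟨Ideal.Quotient.mk (Ideal.span {f}) t, by rw [hφ, LinearMap.lsmul_apply, hsmul]⟩
      have h1 : (LinearMap.range φ).mkQ (Ideal.Quotient.mk (Ideal.span {f})
          (PowerSeries.X * t)) = 0 := by
        rw [Submodule.mkQ_apply]
        exact (Submodule.Quotient.mk_eq_zero _).mpr hmem
      rw [hπapp, h1, map_zero]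
    · intro e
      have hker : Ideal.Quotient.mk (Ideal.span {f}) (h * e) ∈ LinearMap.ker φ := by
        rw [LinearMap.mem_ker, hφ, LinearMap.lsmul_apply, hsmul,
          Ideal.Quotient.eq_zero_iff_mem, ← mul_assoc]
        exact Ideal.mul_mem_right _ _ hXh
      have hmem : (LinearMap.range φ).mkQ (Ideal.Quotient.mk (Ideal.span {f}) (h * e)) ∈
          LinearMap.range ψ :=
        ⟨⟨Ideal.Quotient.mk (Ideal.span {f}) (h * e), hker⟩, by rw [hψ]; rfl⟩
      rw [hπapp, Submodule.mkQ_apply (LinearMap.range ψ)]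
      exact (Submodule.Quotient.mk_eq_zero _).mpr hmem
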